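/- For any hyperplane arrangement A in R^n and any H ∈ A, the number of regions satisfies r(A) = r(A') + r(A''), where A' = A \ {H} is the deleted arrangement and A'' = {H' ∩ H : H' ∈ A', H' ∩ H ≠ ∅, H' ∩ H ≠ H} is the restriction of A to H. -/
import Mathlib

open Set

namespace DelRes

variable {n : ℕ}

abbrev E (n : ℕ) := Fin n → ℝ

/-- The open cell of a sign vector. -/
def cell {ι : Type} (g : ι → (E n →ₗ[ℝ] ℝ)) (d : ι → ℝ) (K : Set (E n)) (s : ι → Bool) :
    Set (E n) :=
  K ∩ {x | ∀ i, if s i then d i < g i x else g i x < d i}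

lemma cell_convex {ι : Type} [Fintype ι] (g : ι → (E n →ₗ[ℝ] ℝ)) (d : ι → ℝ) (K : Set (E n))
    (hK : Convex ℝ K) (s : ι → Bool) : Convex ℝ (cell g d K s) := by
  have : ({x | ∀ i, if s i then d i < g i x else g i x < d i} : Set (E n)) =
      ⋂ i, {x | if s i then d i < g i x else g i x < d i} := by
    ext x; simp [Set.mem_iInter]
  refine hK.inter ?_
  rw [this]
  refine convex_iInter fun i => ?_
  cases hsi : s i
  · simpa using convex_halfSpace_lt (g i).isLinear (d i)
  · simpa using convex_halfSpace_gt (g i).isLinear (d i)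

/-- The number of connected components of the complement equals the number of nonempty
sign cells. -/
lemma card_components {ι : Type} [Fintype ι] (g : ι → (E n →ₗ[ℝ] ℝ)) (d : ι → ℝ)
    (K : Set (E n)) (hK : Convex ℝ K) (X : Set (E n))
    (hX : ∀ x, x ∈ X ↔ x ∈ K ∧ ∀ i, g i x ≠ d i) :
    Nat.card (ConnectedComponents X) =
      Nat.card {s : ι → Bool // (cell g d K s).Nonempty} := by
  classical
  -- sign map
  set sgn : X → (ι → Bool) := fun x i => decide (d i < g i (x : E n)) with hsgn
  have hcellsubX : ∀ s, cell g d K s ⊆ X := by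
    intro s x hx
    rw [hX]
    refine ⟨hx.1, fun i => ?_⟩
    have h2 := hx.2 i
    cases hsi : s i <;> rw [hsi] at h2 <;> simp at h2 <;> intro h <;>
      rw [h] at h2 <;> exact lt_irrefl _ h2
  have hmemcell : ∀ x : X, (x : E n) ∈ cell g d K (sgn x) := by
    intro x
    have hx := (hX x).mp x.2
    refine ⟨hx.1, fun i => ?_⟩
    have hne := hx.2 i
    by_cases h : d i < g i (x : E n)
    · simp [hsgn, h]
    · have : g i (x : E n) < d i := lt_of_le_of_ne (not_lt.mp h) hne
      simp [hsgn, h, this]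
  have hsgn_cell : ∀ (s : ι → Bool) (x : E n), x ∈ cell g d K s →
      ∀ i, decide (d i < g i x) = s i := by
    intro s x hx i
    have := hx.2 i
    cases hsi : s i <;> rw [hsi] at this <;> simp at this ⊢
    · exact le_of_lt this
    · exact this
  -- continuity of sign map
  have hcont : Continuous sgn := by
    refine continuous_pi fun i => ?_
    rw [continuous_discrete_rng]
    have hcg : Continuous fun x : X => g i (x : E n) :=
      ((g i).continuous_of_finiteDimensional).comp continuous_subtype_val
    intro b
    cases b
    · have : (fun x : X => sgn x i) ⁻¹' {false} = {x : X | g i (x : E n) < d i} := by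
        ext x
        have hne := ((hX x).mp x.2).2 i
        simp only [hsgn, Set.mem_preimage, Set.mem_singleton_iff, decide_eq_false_iff_not,
          not_lt, Set.mem_setOf_eq]
        exact ⟨fun h => lt_of_le_of_ne h hne, fun h => h.le⟩
      rw [this]
      exact isOpen_lt hcg continuous_const
    · have : (fun x : X => sgn x i) ⁻¹' {true} = {x : X | d i < g i (x : E n)} := by
        ext x; simp [hsgn]
      rw [this]
      exact isOpen_lt continuous_const hcg
  -- the lift
  let Φ : ConnectedComponents X → (ι → Bool) := hcont.connectedComponentsLift
  have hΦ : ∀ x : X, Φ (ConnectedComponents.mk x) = sgn x := fun x =>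
    hcont.connectedComponentsLift_apply_coe x
  refine Nat.card_congr (Equiv.ofBijective
    (fun c => ⟨Φ c, ?_⟩) ⟨?_, ?_⟩)
  · -- nonempty
    obtain ⟨x, hx⟩ := ConnectedComponents.surjective_coe c
    subst hx
    rw [hΦ]
    exact ⟨x, hmemcell x⟩
  · -- injective
    intro c₁ c₂ h
    obtain ⟨x, hx⟩ := ConnectedComponents.surjective_coe c₁
    obtain ⟨y, hy⟩ := ConnectedComponents.surjective_coe c₂
    subst hx; subst hy
    simp only [Subtype.mk_eq_mk, hΦ] at h
    -- x and y lie in the same convex cell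
    set s := sgn y
    have hxc : (x : E n) ∈ cell g d K s := by rw [← h] at *; exact hmemcell x
    have hyc : (y : E n) ∈ cell g d K s := hmemcell y
    -- the cell, pulled back to X, is preconnected
    have hpre : IsPreconnected ((Subtype.val : X → E n) ⁻¹' cell g d K s) := by
      rw [← Topology.IsInducing.isPreconnected_image Topology.IsInducing.subtypeVal]
      have himg : (Subtype.val : X → E n) '' (Subtype.val ⁻¹' cell g d K s) =
          cell g d K s := by
        rw [Subtype.image_preimage_coe]
        exact Set.inter_eq_right.mpr (hcellsubX s)
      rw [himg]
      exact (cell_convex g d K hK s).isPreconnected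
    have hxy : y ∈ connectedComponent x :=
      hpre.subset_connectedComponent (Set.mem_preimage.mpr hxc) (Set.mem_preimage.mpr hyc)
    exact ConnectedComponents.coe_eq_coe.mpr (connectedComponent_eq hxy)
  · -- surjective
    rintro ⟨s, x, hx⟩
    refine ⟨ConnectedComponents.mk ⟨x, hcellsubX s hx⟩, ?_⟩
    have := hΦ ⟨x, hcellsubX s hx⟩
    apply Subtype.ext
    simp only [this]
    funext i
    exact hsgn_cell s x hx i

end DelRes

namespace DelRes

variable {n : ℕ}

lemma exists_side (C : Set (E n)) (hC : IsOpen C) (F : E n →ₗ[ℝ] ℝ) (hF : F ≠ 0) (c : ℝ)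
    (x : E n) (hx : x ∈ C) (hxc : F x = c) :
    (∃ y ∈ C, c < F y) ∧ (∃ y ∈ C, F y < c) := by
  obtain ⟨u, hu⟩ : ∃ u, F u ≠ 0 := by
    by_contra h; push_neg at h; exact hF (LinearMap.ext fun u => by simp [h u])
  set v := (F u)⁻¹ • u with hvdef
  have hv : F v = 1 := by
    rw [hvdef, map_smul, smul_eq_mul, inv_mul_cancel₀ hu]
  have hcont : Continuous fun t : ℝ => x + t • v := by continuity
  have h0 : (0 : ℝ) ∈ (fun t : ℝ => x + t • v) ⁻¹' C := by
    simp [Set.mem_preimage, hx]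
  obtain ⟨δ, hδ, hball⟩ := Metric.isOpen_iff.mp (hC.preimage hcont) 0 h0
  have hmem : ∀ t : ℝ, |t| < δ → x + t • v ∈ C := by
    intro t ht
    exact hball (by simpa [Real.dist_eq] using ht)
  have hFt : ∀ t : ℝ, F (x + t • v) = c + t := by
    intro t; rw [map_add, map_smul, smul_eq_mul, hv, mul_one, hxc]
  constructor
  · refine ⟨x + (δ/2) • v, hmem _ ?_, by rw [hFt]; linarith⟩
    rw [abs_of_pos (by linarith)]; linarith
  · refine ⟨x + (-(δ/2)) • v, hmem _ ?_, by rw [hFt]; linarith⟩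
    rw [abs_of_neg (by linarith)]; linarith

lemma exists_mem_hyperplane (C : Set (E n)) (hC : Convex ℝ C) (F : E n →ₗ[ℝ] ℝ) (c : ℝ)
    (x y : E n) (hx : x ∈ C) (hy : y ∈ C) (hxc : c < F x) (hyc : F y < c) :
    ∃ z ∈ C, F z = c := by
  set φ : ℝ → E n := fun t => (1 - t) • x + t • y with hφ
  have hφC : ∀ t ∈ Set.Icc (0:ℝ) 1, φ t ∈ C := by
    intro t ht
    exact hC hx hy (by linarith [ht.2]) ht.1 (by ring)
  have hφcont : Continuous φ := by continuity
  have hcont : Continuous (F ∘ φ) := (F.continuous_of_finiteDimensional).comp hφcont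
  have h0 : φ 0 = x := by simp [hφ]
  have h1 : φ 1 = y := by simp [hφ]
  have hcmem : c ∈ Set.Icc ((F ∘ φ) 1) ((F ∘ φ) 0) := by
    simp only [Function.comp_apply, h0, h1]
    exact ⟨hyc.le, hxc.le⟩
  obtain ⟨t, ht, hFt⟩ := intermediate_value_Icc' (by norm_num : (0:ℝ) ≤ 1)
    hcont.continuousOn hcmem
  exact ⟨φ t, hφC t ht, hFt⟩

end DelRes

open DelRes

/-- Deletion-restriction for the number of regions: for a finite arrangement A of affine
hyperplanes in ℝⁿ and H ∈ A, r(A) = r(A') + r(A''), where A' = A \ {H} and A'' is the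
restriction to H.  The complement of A'' inside H is exactly the set of points of H
lying on no hyperplane of A'. -/
theorem deletion_restriction_regions (n : ℕ) [DecidableEq (Set (Fin n → ℝ))] (A : Finset (Set (Fin n → ℝ)))
    (hA : ∀ H' ∈ A, ∃ (f : (Fin n → ℝ) →ₗ[ℝ] ℝ) (c : ℝ), f ≠ 0 ∧ H' = {x | f x = c})
    (H : Set (Fin n → ℝ)) (hH : H ∈ A) :
    Nat.card (ConnectedComponents {x : Fin n → ℝ // ∀ H' ∈ A, x ∉ H'}) =
    Nat.card (ConnectedComponents {x : Fin n → ℝ // ∀ H' ∈ A.erase H, x ∉ H'}) +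
    Nat.card (ConnectedComponents
      {x : Fin n → ℝ // x ∈ H ∧ ∀ H' ∈ A.erase H, x ∉ H'}) := by
  classical
  choose! f c hf0 hfc using hA
  have hmem_iff : ∀ H', H' ∈ A → ∀ x, x ∈ H' ↔ f H' x = c H' := by
    intro H' hH' x
    conv_lhs => rw [hfc H' hH']
    exact Iff.rfl
  set ι := {H' : Set (Fin n → ℝ) // H' ∈ A.erase H} with hι
  have hmemA : ∀ i : ι, i.1 ∈ A := fun i => Finset.mem_of_mem_erase i.2
  set g : ι → (Fin n → ℝ) →ₗ[ℝ] ℝ := fun i => f i.1 with hg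
  set d : ι → ℝ := fun i => c i.1 with hd
  set gg : Option ι → (Fin n → ℝ) →ₗ[ℝ] ℝ := fun o => o.elim (f H) g with hgg
  set dd : Option ι → ℝ := fun o => o.elim (c H) d with hdd
  set Hset : Set (Fin n → ℝ) := {x | f H x = c H} with hHset
  set Cs : (ι → Bool) → Set (Fin n → ℝ) :=
    fun s => {x | ∀ i : ι, if s i then d i < g i x else g i x < d i} with hCs
  set side : Bool → Set (Fin n → ℝ) :=
    fun b => {x | if b then c H < f H x else f H x < c H} with hside
  -- three applications of card_components
  have e1 : Nat.card (ConnectedComponents {x : Fin n → ℝ // ∀ H' ∈ A, x ∉ H'}) =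
      Nat.card {t : Option ι → Bool // (cell gg dd Set.univ t).Nonempty} := by
    refine card_components gg dd Set.univ convex_univ {x | ∀ H' ∈ A, x ∉ H'} ?_
    intro x
    simp only [Set.mem_setOf_eq, Set.mem_univ, true_and, Option.forall]
    constructor
    · intro h
      refine ⟨?_, fun i => ?_⟩
      · intro heq; exact h H hH ((hmem_iff H hH x).mpr heq)
      · intro heq; exact h i.1 (hmemA i) ((hmem_iff i.1 (hmemA i) x).mpr heq)
    · rintro ⟨h0, hi⟩ H' hH' hxH'
      by_cases hHH : H' = H
      · subst hHH; exact h0 ((hmem_iff H' hH' x).mp hxH')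
      · exact hi ⟨H', Finset.mem_erase.mpr ⟨hHH, hH'⟩⟩ ((hmem_iff H' hH' x).mp hxH')
  have e2 : Nat.card (ConnectedComponents {x : Fin n → ℝ // ∀ H' ∈ A.erase H, x ∉ H'}) =
      Nat.card {s : ι → Bool // (cell g d Set.univ s).Nonempty} := by
    refine card_components g d Set.univ convex_univ {x | ∀ H' ∈ A.erase H, x ∉ H'} ?_
    intro x
    simp only [Set.mem_setOf_eq, Set.mem_univ, true_and]
    constructor
    · intro h i heq
      exact h i.1 i.2 ((hmem_iff i.1 (hmemA i) x).mpr heq)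
    · intro h H' hH' hxH'
      exact h ⟨H', hH'⟩ ((hmem_iff H' (Finset.mem_of_mem_erase hH') x).mp hxH')
  have e3 : Nat.card (ConnectedComponents
        {x : Fin n → ℝ // x ∈ H ∧ ∀ H' ∈ A.erase H, x ∉ H'}) =
      Nat.card {s : ι → Bool // (cell g d Hset s).Nonempty} := by
    refine card_components g d Hset (convex_hyperplane (f H).isLinear (c H))
      {x | x ∈ H ∧ ∀ H' ∈ A.erase H, x ∉ H'} ?_
    intro x
    simp only [Set.mem_setOf_eq]
    constructor
    · rintro ⟨hxH, h⟩
      refine ⟨(hmem_iff H hH x).mp hxH, fun i heq => ?_⟩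
      exact h i.1 i.2 ((hmem_iff i.1 (hmemA i) x).mpr heq)
    · rintro ⟨hxH, h⟩
      refine ⟨(hmem_iff H hH x).mpr hxH, fun H' hH' hxH' => ?_⟩
      exact h ⟨H', hH'⟩ ((hmem_iff H' (Finset.mem_of_mem_erase hH') x).mp hxH')
  rw [e1, e2, e3]
  -- unfold the cells
  have cellu : ∀ s, cell g d Set.univ s = Cs s := fun s => Set.univ_inter _
  have cellH : ∀ s, cell g d Hset s = Hset ∩ Cs s := fun s => rfl
  have celldecomp : ∀ t : Option ι → Bool,
      cell gg dd Set.univ t = side (t none) ∩ Cs (fun i => t (some i)) := by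
    intro t
    ext x
    simp only [cell, hCs, hside, hgg, hdd, Set.mem_inter_iff, Set.mem_univ, true_and,
      Set.mem_setOf_eq, Option.forall, Option.elim]
  -- basic facts about cells
  have hCopen : ∀ s, IsOpen (Cs s) := by
    intro s
    have h : Cs s = ⋂ i : ι, {x | if s i then d i < g i x else g i x < d i} := by
      ext x; simp [hCs, Set.mem_iInter]
    rw [h]
    refine isOpen_iInter_of_finite fun i => ?_
    cases hsi : s i
    · simpa using isOpen_lt (g i).continuous_of_finiteDimensional continuous_const
    · simpa using isOpen_lt continuous_const (g i).continuous_of_finiteDimensional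
  have hCconv : ∀ s, Convex ℝ (Cs s) := by
    intro s
    have h := cell_convex g d Set.univ convex_univ s
    rwa [cellu] at h
  have hside_mem : ∀ (b : Bool) (x), x ∈ side b ↔ if b then c H < f H x else f H x < c H :=
    fun b x => Iff.rfl
  have hfH0 : f H ≠ 0 := hf0 H hH
  -- the key pointwise equivalences
  have key1 : ∀ s : ι → Bool, (Hset ∩ Cs s).Nonempty ↔
      ((side true ∩ Cs s).Nonempty ∧ (side false ∩ Cs s).Nonempty) := by
    intro s
    constructor
    · rintro ⟨x, hxH, hxC⟩
      obtain ⟨⟨y, hy, hyg⟩, ⟨z, hz, hzl⟩⟩ := exists_side (Cs s) (hCopen s) (f H) hfH0 (c H) x hxC hxH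
      exact ⟨⟨y, by simpa [hside] using hyg, hy⟩, ⟨z, by simpa [hside] using hzl, hz⟩⟩
    · rintro ⟨⟨x, hxs, hxC⟩, ⟨y, hys, hyC⟩⟩
      have hxs' : c H < f H x := by simpa [hside] using hxs
      have hys' : f H y < c H := by simpa [hside] using hys
      obtain ⟨z, hzC, hzH⟩ := exists_mem_hyperplane (Cs s) (hCconv s) (f H) (c H) x y hxC hyC hxs' hys'
      exact ⟨z, hzH, hzC⟩
  have key2 : ∀ s : ι → Bool, (Cs s).Nonempty ↔
      ((side true ∩ Cs s).Nonempty ∨ (side false ∩ Cs s).Nonempty) := by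
    intro s
    constructor
    · rintro ⟨x, hx⟩
      rcases lt_trichotomy (f H x) (c H) with hlt | heq | hgt
      · exact Or.inr ⟨x, by simpa [hside] using hlt, hx⟩
      · obtain ⟨⟨y, hy, hyg⟩, _⟩ := exists_side (Cs s) (hCopen s) (f H) hfH0 (c H) x hx heq
        exact Or.inl ⟨y, by simpa [hside] using hyg, hy⟩
      · exact Or.inl ⟨x, by simpa [hside] using hgt, hx⟩
    · rintro (⟨x, _, hx⟩ | ⟨x, _, hx⟩) <;> exact ⟨x, hx⟩
  -- now pure counting
  have count1 : Nat.card {t : Option ι → Bool // (cell gg dd Set.univ t).Nonempty} =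
      Nat.card {p : Bool × (ι → Bool) // (side p.1 ∩ Cs p.2).Nonempty} := by
    refine Nat.card_congr (Equiv.subtypeEquiv (Equiv.piOptionEquivProd) fun t => ?_)
    rw [celldecomp t]
    exact Iff.rfl
  rw [count1]
  simp only [cellu, cellH]
  rw [Nat.card_eq_fintype_card, Nat.card_eq_fintype_card, Nat.card_eq_fintype_card,
    Fintype.card_subtype, Fintype.card_subtype, Fintype.card_subtype,
    Finset.card_filter, Finset.card_filter, Finset.card_filter,
    Fintype.sum_prod_type, Fintype.sum_bool, ← Finset.sum_add_distrib,
    ← Finset.sum_add_distrib]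
  refine Finset.sum_congr rfl fun s _ => ?_
  have h1 := key1 s
  have h2 := key2 s
  by_cases hp : (side true ∩ Cs s).Nonempty <;> by_cases hq : (side false ∩ Cs s).Nonempty <;>
    simp [hp, hq, h1, h2]
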